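/- arXiv:1712.03347 — 5 statements merged into one kernel-verified Lean document; each statement's English description precedes it below -/
import Mathlib

section
/- Let 0 < s < 1. The integral over ℝ^n of (1 - cos(z_n))/|z|^(n+2s) dz is finite, where z_n denotes the last coordinate of z. -/
open MeasureTheory Metric Set Real

lemma aux_ball (n : ℕ) (hn : 1 ≤ n) (a : ℝ) (ha : -(n:ℝ) < a) :
    IntegrableOn (fun x : EuclideanSpace ℝ (Fin n) => ‖x‖ ^ a) (Metric.ball 0 1) := by
  have hmeas : Measurable (fun x : EuclideanSpace ℝ (Fin n) => ‖x‖ ^ a) :=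
    by fun_prop
  constructor
  · exact hmeas.aestronglyMeasurable.restrict
  · rw [HasFiniteIntegral]
    have hnn : ∀ x : EuclideanSpace ℝ (Fin n), (‖‖x‖ ^ a‖ₑ : ENNReal) = ENNReal.ofReal (‖x‖ ^ a) :=
      fun x => Real.enorm_eq_ofReal (Real.rpow_nonneg (norm_nonneg x) a)
    simp_rw [hnn]
    rcases le_or_gt 0 a with h0 | h0
    · calc ∫⁻ x in Metric.ball (0:EuclideanSpace ℝ (Fin n)) 1, ENNReal.ofReal (‖x‖ ^ a)
          ≤ ∫⁻ _x in Metric.ball (0:EuclideanSpace ℝ (Fin n)) 1, 1 := by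
            apply setLIntegral_mono' measurableSet_ball
            intro x hx
            rw [mem_ball_zero_iff] at hx
            have : ‖x‖ ^ a ≤ 1 := Real.rpow_le_one (norm_nonneg x) hx.le h0
            calc ENNReal.ofReal (‖x‖ ^ a) ≤ ENNReal.ofReal 1 := ENNReal.ofReal_le_ofReal this
              _ = 1 := ENNReal.ofReal_one
        _ < ⊤ := by
            rw [setLIntegral_one]
            exact measure_ball_lt_top
    · -- a < 0, layer cake
      rw [lintegral_eq_lintegral_meas_le _
        (ae_of_all _ (fun x => Real.rpow_nonneg (norm_nonneg x) a))
        hmeas.aemeasurable.restrict]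
      set B := volume (Metric.ball (0:EuclideanSpace ℝ (Fin n)) 1) with hB
      have hBlt : B < ⊤ := measure_ball_lt_top
      calc ∫⁻ t in Ioi (0:ℝ),
            (volume.restrict (Metric.ball (0:EuclideanSpace ℝ (Fin n)) 1))
              {x | t ≤ ‖x‖ ^ a}
          ≤ ∫⁻ t in Ioc (0:ℝ) 1 ∪ Ioi 1,
            (volume.restrict (Metric.ball (0:EuclideanSpace ℝ (Fin n)) 1))
              {x | t ≤ ‖x‖ ^ a} := lintegral_mono_set Ioi_subset_Ioc_union_Ioi
        _ ≤ (∫⁻ t in Ioc (0:ℝ) 1, (volume.restrict (Metric.ball (0:EuclideanSpace ℝ (Fin n)) 1))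
              {x | t ≤ ‖x‖ ^ a})
            + ∫⁻ t in Ioi (1:ℝ), (volume.restrict (Metric.ball (0:EuclideanSpace ℝ (Fin n)) 1))
              {x | t ≤ ‖x‖ ^ a} := lintegral_union_le _ _ _
        _ < ⊤ := by
            apply ENNReal.add_lt_top.2
            constructor
            · calc ∫⁻ t in Ioc (0:ℝ) 1, (volume.restrict (Metric.ball (0:EuclideanSpace ℝ (Fin n)) 1))
                    {x | t ≤ ‖x‖ ^ a}
                  ≤ ∫⁻ _t in Ioc (0:ℝ) 1, B := by
                    exact lintegral_mono (fun t => le_trans (measure_mono (subset_univ _))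
                      (le_of_eq (Measure.restrict_apply_univ _)))
                _ = B * volume (Ioc (0:ℝ) 1) := setLIntegral_const _ _
                _ < ⊤ := ENNReal.mul_lt_top hBlt (by simp)
            · have key : ∀ t ∈ Ioi (1:ℝ),
                  (volume.restrict (Metric.ball (0:EuclideanSpace ℝ (Fin n)) 1))
                    {x | t ≤ ‖x‖ ^ a} ≤ ENNReal.ofReal (t ^ (a⁻¹ * n)) * B := by
                intro t ht
                have ht0 : (0:ℝ) < t := lt_trans one_pos ht
                have hsub : {x : EuclideanSpace ℝ (Fin n) | t ≤ ‖x‖ ^ a}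
                    ⊆ Metric.closedBall 0 (t ^ a⁻¹) := by
                  intro x hx
                  simp only [mem_setOf_eq] at hx
                  rcases eq_or_lt_of_le (norm_nonneg x) with h | h
                  · exfalso
                    rw [← h, Real.zero_rpow (ne_of_lt h0)] at hx
                    linarith
                  · rw [mem_closedBall_zero_iff]
                    exact ((Real.le_rpow_inv_iff_of_neg h ht0 h0).mpr hx)
                    -- might need adjusting
                calc (volume.restrict (Metric.ball (0:EuclideanSpace ℝ (Fin n)) 1))
                      {x | t ≤ ‖x‖ ^ a}
                    ≤ volume {x : EuclideanSpace ℝ (Fin n) | t ≤ ‖x‖ ^ a} :=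
                      Measure.restrict_apply_le _ _ |>.trans (measure_mono (fun x hx => hx)) 
                  _ ≤ volume (Metric.closedBall (0:EuclideanSpace ℝ (Fin n)) (t ^ a⁻¹)) :=
                      measure_mono hsub
                  _ = ENNReal.ofReal ((t ^ a⁻¹) ^ (Module.finrank ℝ (EuclideanSpace ℝ (Fin n)))) * B :=
                      Measure.addHaar_closedBall _ _ (Real.rpow_nonneg ht0.le _)
                  _ = ENNReal.ofReal (t ^ (a⁻¹ * n)) * B := by
                      rw [← Real.rpow_natCast (t ^ a⁻¹) _, ← Real.rpow_mul ht0.le,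
                        finrank_euclideanSpace_fin]
              calc ∫⁻ t in Ioi (1:ℝ), (volume.restrict (Metric.ball (0:EuclideanSpace ℝ (Fin n)) 1))
                    {x | t ≤ ‖x‖ ^ a}
                  ≤ ∫⁻ t in Ioi (1:ℝ), ENNReal.ofReal (t ^ (a⁻¹ * n)) * B :=
                    setLIntegral_mono' measurableSet_Ioi key
                _ = (∫⁻ t in Ioi (1:ℝ), ENNReal.ofReal (t ^ (a⁻¹ * n))) * B :=
                    lintegral_mul_const' _ _ hBlt.ne
                _ < ⊤ := by
                    apply ENNReal.mul_lt_top _ hBlt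
                    have hc : a⁻¹ * (n:ℝ) < -1 := by
                      rw [inv_mul_eq_div, div_lt_iff_of_neg h0]
                      linarith
                    have hint : IntegrableOn (fun t : ℝ => t ^ (a⁻¹ * n)) (Ioi 1) :=
                      integrableOn_Ioi_rpow_of_lt hc one_pos
                    have := hint.hasFiniteIntegral
                    rw [HasFiniteIntegral] at this
                    refine lt_of_le_of_lt (le_of_eq ?_) this
                    apply setLIntegral_congr_fun measurableSet_Ioi
                    intro t ht
                    beta_reduce
                    rw [← Real.enorm_eq_ofReal (Real.rpow_nonneg (le_of_lt (lt_trans one_pos ht)) _)]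

/-- For `0 < s < 1`, the integral over `ℝⁿ` of `(1 - cos zₙ)/|z|^{n+2s}` is finite,
where `zₙ` is the last coordinate of `z`. -/
theorem integrable_one_sub_cos_div_rpow
    (n : ℕ) (hn : 1 ≤ n) (s : ℝ) (hs0 : 0 < s) (hs1 : s < 1) :
    Integrable (fun z : EuclideanSpace ℝ (Fin n) =>
      (1 - Real.cos (z ⟨n - 1, by omega⟩)) / ‖z‖ ^ ((n : ℝ) + 2 * s)) := by
  set i : Fin n := ⟨n - 1, by omega⟩
  set p : ℝ := (n : ℝ) + 2 * s with hp
  have hp0 : 0 < p := by positivity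
  set f : EuclideanSpace ℝ (Fin n) → ℝ := fun z => (1 - Real.cos (z i)) / ‖z‖ ^ p with hf
  have hfm : AEStronglyMeasurable f volume := by
    apply Measurable.aestronglyMeasurable
    fun_prop
  have hfnonneg : ∀ z, 0 ≤ f z := by
    intro z
    apply div_nonneg
    · have := Real.cos_le_one (z i); linarith
    · positivity
  -- coordinate bound
  have hcoord : ∀ z : EuclideanSpace ℝ (Fin n), (z i) ^ 2 ≤ ‖z‖ ^ 2 := by
    intro z
    rw [PiLp.norm_sq_eq_of_L2]
    have : (z i)^2 = ‖z i‖^2 := by rw [Real.norm_eq_abs, sq_abs]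
    rw [this]
    exact Finset.single_le_sum (f := fun j => ‖z j‖ ^ 2)
      (fun j _ => sq_nonneg _) (Finset.mem_univ i)
  have hIball : IntegrableOn f (Metric.ball 0 1) := by
    have ha : -(n:ℝ) < 2 - p := by simp only [hp]; linarith
    have hg : IntegrableOn (fun z : EuclideanSpace ℝ (Fin n) => (1/2) * ‖z‖ ^ (2 - p))
        (Metric.ball 0 1) := (aux_ball n hn (2 - p) ha).const_mul _
    apply Integrable.mono' hg hfm.restrict
    apply ae_of_all
    intro z
    rw [Real.norm_of_nonneg (hfnonneg z)]
    rcases eq_or_lt_of_le (norm_nonneg z) with h | h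
    · have hz0 : z = 0 := by rwa [eq_comm, norm_eq_zero] at h
      have : f z = 0 := by
        simp [hf, hz0]
      rw [this]
      positivity
    · have hD : 0 < ‖z‖ ^ p := Real.rpow_pos_of_pos h _
      rw [hf]
      simp only
      rw [div_le_iff₀ hD]
      have key : (1/2 : ℝ) * ‖z‖ ^ (2 - p) * ‖z‖ ^ p = (1/2) * ‖z‖ ^ 2 := by
        rw [mul_assoc, ← Real.rpow_add h, sub_add_cancel]
        norm_num [Real.rpow_two]
      rw [key]
      have h1 : 1 - Real.cos (z i) ≤ (z i)^2 / 2 := by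
        have := Real.one_sub_sq_div_two_le_cos (x := z i); linarith
      have h2 := hcoord z
      linarith
  have hIcompl : IntegrableOn f (Metric.ball 0 1)ᶜ := by
    have hnr : (Module.finrank ℝ (EuclideanSpace ℝ (Fin n)) : ℝ) < p := by
      rw [finrank_euclideanSpace_fin]; simp only [hp]; linarith
    have hg : Integrable (fun z : EuclideanSpace ℝ (Fin n) =>
        (2 * 2 ^ p) * (1 + ‖z‖) ^ (-p)) := (integrable_one_add_norm hnr).const_mul _
    apply Integrable.mono' hg.integrableOn hfm.restrict
    rw [ae_restrict_iff' measurableSet_ball.compl]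
    apply ae_of_all
    intro z hz
    rw [Set.mem_compl_iff, Metric.mem_ball, dist_zero_right, not_lt] at hz
    have hz0 : (0:ℝ) < ‖z‖ := lt_of_lt_of_le one_pos hz
    have hD : 0 < ‖z‖ ^ p := Real.rpow_pos_of_pos hz0 _
    have hB : (0:ℝ) < (1 + ‖z‖) ^ p := Real.rpow_pos_of_pos (by linarith) _
    rw [Real.norm_of_nonneg (hfnonneg z)]
    have step1 : f z ≤ 2 / ‖z‖ ^ p := by
      apply div_le_div₀ (by norm_num) ?_ hD le_rfl
      have := Real.neg_one_le_cos (z i); linarith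
    have hpow : (1 + ‖z‖) ^ p ≤ 2 ^ p * ‖z‖ ^ p := by
      rw [← Real.mul_rpow (by norm_num) (norm_nonneg z)]
      apply Real.rpow_le_rpow (by positivity) (by linarith) hp0.le
    have step2 : 2 / ‖z‖ ^ p ≤ (2 * 2 ^ p) * (1 + ‖z‖) ^ (-p) := by
      rw [Real.rpow_neg (by positivity), ← div_eq_mul_inv, div_le_div_iff₀ hD hB]
      have h2p : (0:ℝ) < 2 ^ p := Real.rpow_pos_of_pos two_pos _
      nlinarith
    linarith
  have : IntegrableOn f (Metric.ball 0 1 ∪ (Metric.ball 0 1)ᶜ) :=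
    MeasureTheory.integrableOn_union.2 ⟨hIball, hIcompl⟩
  rwa [Set.union_compl_self, integrableOn_univ] at this
end

section
/- For 0 < s < 1, the integral from 0 to ∞ of u^(-s-1)(1 - e^(-u)) du equals Γ(1-s)/s. -/
open MeasureTheory Real Set

lemma rpow_mul_self (x : ℝ) (hx : 0 < x) (r : ℝ) : x ^ r * x = x ^ (r + 1) := by
  rw [Real.rpow_add_one (ne_of_gt hx)]

lemma integrand_integrable (s : ℝ) (hs0 : 0 < s) (hs1 : s < 1) :
    IntegrableOn (fun u : ℝ => u ^ (-s - 1) * (1 - Real.exp (-u))) (Ioi 0) := by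
  rw [← Ioc_union_Ioi_eq_Ioi (zero_le_one (α := ℝ)), integrableOn_union]
  constructor
  · -- on (0,1]: bound by u ^ (-s)
    have hint : IntegrableOn (fun u : ℝ => u ^ (-s)) (Ioc (0:ℝ) 1) := by
      rw [← intervalIntegrable_iff_integrableOn_Ioc_of_le zero_le_one]
      exact intervalIntegral.intervalIntegrable_rpow' (by linarith)
    refine hint.integrable.mono ?_ ?_
    · apply ContinuousOn.aestronglyMeasurable ?_ measurableSet_Ioc
      intro x hx
      exact ((Real.continuousAt_rpow_const x _ (Or.inl (ne_of_gt hx.1))).mul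
        (by fun_prop)).continuousWithinAt
    · filter_upwards [ae_restrict_mem measurableSet_Ioc] with x hx
      have hx0 : 0 < x := hx.1
      have h1 : 0 ≤ 1 - Real.exp (-x) := by
        simp [Real.exp_le_one_iff.mpr (by linarith : -x ≤ 0)]
      have h2 : 1 - Real.exp (-x) ≤ x := by
        nlinarith [Real.add_one_le_exp (-x)]
      rw [Real.norm_eq_abs, Real.norm_eq_abs, abs_of_nonneg
          (mul_nonneg (Real.rpow_nonneg hx0.le _) h1),
        abs_of_nonneg (Real.rpow_nonneg hx0.le _)]
      calc x ^ (-s - 1) * (1 - Real.exp (-x)) ≤ x ^ (-s - 1) * x :=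
            mul_le_mul_of_nonneg_left h2 (Real.rpow_nonneg hx0.le _)
        _ = x ^ (-s) := by rw [rpow_mul_self x hx0]; norm_num
  · -- on (1,∞): bound by u ^ (-s - 1)
    have hint : IntegrableOn (fun u : ℝ => u ^ (-s - 1)) (Ioi (1:ℝ)) :=
      integrableOn_Ioi_rpow_of_lt (by linarith) one_pos
    refine hint.integrable.mono ?_ ?_
    · apply ContinuousOn.aestronglyMeasurable ?_ measurableSet_Ioi
      intro x hx
      have hx0 : (0:ℝ) < x := lt_trans one_pos hx
      exact ((Real.continuousAt_rpow_const x _ (Or.inl (ne_of_gt hx0))).mul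
        (by fun_prop)).continuousWithinAt
    · filter_upwards [ae_restrict_mem measurableSet_Ioi] with x hx
      have hx0 : (0:ℝ) < x := lt_trans one_pos hx
      have h1 : 0 ≤ 1 - Real.exp (-x) := by
        simp [Real.exp_le_one_iff.mpr (by linarith : -x ≤ 0)]
      have h2 : 1 - Real.exp (-x) ≤ 1 := by linarith [Real.exp_pos (-x)]
      rw [Real.norm_eq_abs, Real.norm_eq_abs, abs_of_nonneg
          (mul_nonneg (Real.rpow_nonneg hx0.le _) h1),
        abs_of_nonneg (Real.rpow_nonneg hx0.le _)]
      nlinarith [Real.rpow_nonneg hx0.le (-s - 1)]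

/-- For `0 < s < 1`, `∫₀^∞ u^{-s-1}(1 - e^{-u}) du = Γ(1-s)/s`. -/
theorem integral_rpow_one_sub_exp
    (s : ℝ) (hs0 : 0 < s) (hs1 : s < 1) :
    ∫ u in Ioi (0 : ℝ), u ^ (-s - 1) * (1 - Real.exp (-u))
      = Real.Gamma (1 - s) / s := by
  -- integration by parts with U = 1 - exp(-x), V = -x^(-s)/s
  set U : ℝ → ℝ := fun x => 1 - Real.exp (-x) with hU
  set U' : ℝ → ℝ := fun x => Real.exp (-x) with hU'
  set V : ℝ → ℝ := fun x => -x ^ (-s) / s with hV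
  set V' : ℝ → ℝ := fun x => x ^ (-s - 1) with hV'
  have hUderiv : ∀ x ∈ Ioi (0:ℝ), HasDerivAt U (U' x) x := by
    intro x _
    simpa using ((Real.hasDerivAt_exp (-x)).comp x (hasDerivAt_neg x)).const_sub 1
  have hVderiv : ∀ x ∈ Ioi (0:ℝ), HasDerivAt V (V' x) x := by
    intro x hx
    have h := (Real.hasDerivAt_rpow_const (p := -s) (Or.inl (ne_of_gt hx))).neg.div_const s
    refine HasDerivAt.congr_deriv h ?_
    show -(-s * x ^ (-s - 1)) / s = x ^ (-s - 1)
    try field_simp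
    try ring_nf
  have hUV' : IntegrableOn (U * V') (Ioi (0:ℝ)) := by
    have := integrand_integrable s hs0 hs1
    refine this.congr_fun (fun x _ => ?_) measurableSet_Ioi
    simp only [hU, hV', Pi.mul_def]; ring
  have hU'V : IntegrableOn (U' * V) (Ioi (0:ℝ)) := by
    have h0 : IntegrableOn (fun x : ℝ =>
        (-(Real.exp (-x) * x ^ (1 - s - 1))) / s) (Ioi 0) :=
      (Real.GammaIntegral_convergent (s := 1 - s) (by linarith)).neg.div_const s
    refine h0.congr_fun (fun x _ => ?_) measurableSet_Ioi
    simp only [hU', hV, Pi.mul_def]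
    have : (1:ℝ) - s - 1 = -s := by ring
    rw [this]; ring
  have h_zero : Filter.Tendsto (U * V) (nhdsWithin 0 (Ioi 0)) (nhds 0) := by
    have hmain : Filter.Tendsto (fun x : ℝ => x ^ (1 - s)) (nhdsWithin 0 (Ioi 0)) (nhds 0) := by
      have := (Real.continuousAt_rpow_const 0 (1 - s) (Or.inr (by linarith))).tendsto
      rw [Real.zero_rpow (by linarith : (1:ℝ) - s ≠ 0)] at this
      exact this.mono_left nhdsWithin_le_nhds
    have hsq : Filter.Tendsto (fun x : ℝ => x ^ (1 - s) / s) (nhdsWithin 0 (Ioi 0)) (nhds 0) := by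
      simpa using hmain.div_const s
    refine squeeze_zero_norm' ?_ hsq
    filter_upwards [self_mem_nhdsWithin] with x (hx : (0:ℝ) < x)
    have h1 : 0 ≤ 1 - Real.exp (-x) := by
      simp [Real.exp_le_one_iff.mpr (by linarith : -x ≤ 0)]
    have h2 : 1 - Real.exp (-x) ≤ x := by nlinarith [Real.add_one_le_exp (-x)]
    have h3 : x ^ (-s) * (1 - Real.exp (-x)) ≤ x ^ (1 - s) := by
      calc x ^ (-s) * (1 - Real.exp (-x)) ≤ x ^ (-s) * x :=
            mul_le_mul_of_nonneg_left h2 (Real.rpow_nonneg hx.le _)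
        _ = x ^ (1 - s) := by rw [rpow_mul_self x hx]; ring_nf
    have hval : (U * V) x = -(x ^ (-s) * (1 - Real.exp (-x)) / s) := by
      simp only [hU, hV, Pi.mul_def]; ring
    rw [hval, norm_neg, Real.norm_eq_abs,
      abs_of_nonneg (by positivity : 0 ≤ x ^ (-s) * (1 - Real.exp (-x)) / s)]
    exact div_le_div_of_nonneg_right h3 hs0.le
  have h_infty : Filter.Tendsto (U * V) Filter.atTop (nhds 0) := by
    have h1 : Filter.Tendsto (fun x : ℝ => x ^ (-s)) Filter.atTop (nhds 0) :=
      tendsto_rpow_neg_atTop hs0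
    have h2 : Filter.Tendsto U Filter.atTop (nhds 1) := by
      have : Filter.Tendsto (fun x : ℝ => Real.exp (-x)) Filter.atTop (nhds 0) := by
        simpa using Real.tendsto_exp_neg_atTop_nhds_zero
      simpa [hU] using this.const_sub 1
    have := h2.mul (h1.neg.div_const s)
    rw [show (1:ℝ) * (-0 / s) = 0 by simp] at this
    exact this
  have key := integral_Ioi_mul_deriv_eq_deriv_mul hUderiv hVderiv hUV' hU'V h_zero h_infty
  have heq : ∫ x in Ioi (0:ℝ), U x * V' x
      = ∫ u in Ioi (0:ℝ), u ^ (-s - 1) * (1 - Real.exp (-u)) := by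
    refine setIntegral_congr_fun measurableSet_Ioi (fun x _ => ?_)
    simp only [hU, hV']; ring
  have hG : ∫ x in Ioi (0:ℝ), U' x * V x = -(Real.Gamma (1 - s) / s) := by
    rw [Real.Gamma_eq_integral (by linarith : (0:ℝ) < 1 - s), ← integral_div, ← integral_neg]
    refine setIntegral_congr_fun measurableSet_Ioi (fun x _ => ?_)
    simp only [hU', hV]
    have : (1:ℝ) - s - 1 = -s := by ring
    rw [this]; ring
  rw [← heq, key, hG]
  ring
end

section
/- Let φ : ℝ^n → ℝ be continuous, bounded, nonnegative and not identically zero, and let f(x,t) = ∫ G(x-y,t)φ(y) dy be its heat extension. Then for all x, y ∈ ℝ^n and 0 < s < t, f(x,s) ≤ f(y,t) (t/s)^(n/2) exp(|x-y|²/(4(t-s))). -/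
open MeasureTheory Real

lemma pini_aux_scalar (A B D s t : ℝ) (hA : 0 ≤ A) (hD : 0 ≤ D) (hB : B ≤ A + D)
    (hB0 : 0 ≤ B) (hs : 0 < s) (hst : s < t) :
    B ^ 2 / t ≤ A ^ 2 / s + D ^ 2 / (t - s) := by
  have ht : 0 < t := hs.trans hst
  have h1 : 0 < t - s := by linarith
  have hB2 : B ^ 2 ≤ (A + D) ^ 2 := by nlinarith
  rw [div_add_div _ _ hs.ne' h1.ne', div_le_div_iff₀ ht (by positivity)]
  nlinarith [sq_nonneg (D * s - A * (t - s)),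
    mul_le_mul_of_nonneg_right hB2 (mul_pos hs h1).le]

lemma pini_aux_prefactor (s t : ℝ) (n : ℕ) (hs : 0 < s) (hst : s < t) :
    (4 * π * s) ^ (-(n : ℝ) / 2) = (4 * π * t) ^ (-(n : ℝ) / 2) * (t / s) ^ ((n : ℝ) / 2) := by
  have ht : 0 < t := hs.trans hst
  have hπ : (0:ℝ) < 4 * π := by positivity
  rw [Real.div_rpow ht.le hs.le, Real.mul_rpow (by positivity) ht.le,
    Real.mul_rpow (by positivity) hs.le]
  rw [show -(n:ℝ)/2 = -((n:ℝ)/2) by ring, Real.rpow_neg (by positivity),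
    Real.rpow_neg ht.le, Real.rpow_neg hs.le]
  have h1 : (0:ℝ) < (4*π) ^ ((n:ℝ)/2) := Real.rpow_pos_of_pos hπ _
  have h2 : (0:ℝ) < s ^ ((n:ℝ)/2) := Real.rpow_pos_of_pos hs _
  have h3 : (0:ℝ) < t ^ ((n:ℝ)/2) := Real.rpow_pos_of_pos ht _
  field_simp

lemma pini_aux_gauss_integrable (n : ℕ) (b : ℝ) (hb : 0 < b) :
    Integrable (fun v : EuclideanSpace ℝ (Fin n) => Real.exp (-b * ‖v‖ ^ 2)) := by
  have h := GaussianFourier.integrable_cexp_neg_mul_sq_norm_add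
    (V := EuclideanSpace ℝ (Fin n)) (b := (b:ℂ)) (by simpa using hb) 0 0
  have := h.norm
  simpa [Complex.norm_exp, ← Complex.ofReal_pow] using this

/-- The Pini–Hadamard scale invariant Harnack inequality: for `f = P_t φ` with
`φ ≥ 0` continuous, bounded and not identically zero, and `0 < s < t`,
`f(x,s) ≤ f(y,t) (t/s)^{n/2} exp(|x-y|²/(4(t-s)))`. -/
theorem pini_hadamard_harnack
    (n : ℕ) (hn : 1 ≤ n)
    (φ : EuclideanSpace ℝ (Fin n) → ℝ)
    (hφc : Continuous φ) (hφb : ∃ M, ∀ x, |φ x| ≤ M) (hφ0 : ∀ x, 0 ≤ φ x)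
    (hφne : ∃ z, φ z ≠ 0)
    (f : EuclideanSpace ℝ (Fin n) → ℝ → ℝ)
    (hf : ∀ x t, f x t = ∫ y : EuclideanSpace ℝ (Fin n),
      (4 * π * t) ^ (-(n : ℝ) / 2) * Real.exp (-‖x - y‖ ^ 2 / (4 * t)) * φ y)
    (x y : EuclideanSpace ℝ (Fin n)) (s t : ℝ) (hs : 0 < s) (hst : s < t) :
    f x s ≤ f y t * (t / s) ^ ((n : ℝ) / 2) * Real.exp (‖x - y‖ ^ 2 / (4 * (t - s))) := by
  obtain ⟨M, hM⟩ := hφb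
  have ht : 0 < t := hs.trans hst
  have h1 : 0 < t - s := by linarith
  set C : ℝ := (t / s) ^ ((n : ℝ) / 2) * Real.exp (‖x - y‖ ^ 2 / (4 * (t - s))) with hC
  have hCpos : 0 < C := by positivity
  -- the dominating integrand
  set g : EuclideanSpace ℝ (Fin n) → ℝ :=
    fun z => (4 * π * t) ^ (-(n : ℝ) / 2) * Real.exp (-‖y - z‖ ^ 2 / (4 * t)) * φ z * C
    with hg
  -- integrability of g
  have hgi : Integrable g := by
    have hb : (0:ℝ) < 1 / (4 * t) := by positivity
    have h0 : Integrable (fun v : EuclideanSpace ℝ (Fin n) =>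
        Real.exp (-(1 / (4 * t)) * ‖v‖ ^ 2)) := pini_aux_gauss_integrable n _ hb
    have h1' : Integrable (fun z : EuclideanSpace ℝ (Fin n) =>
        Real.exp (-(1 / (4 * t)) * ‖y - z‖ ^ 2)) := by
      exact (integrable_comp_sub_left
        (fun v : EuclideanSpace ℝ (Fin n) => Real.exp (-(1 / (4 * t)) * ‖v‖ ^ 2)) y).2 h0
    have h2 : Integrable (fun z : EuclideanSpace ℝ (Fin n) =>
        φ z * Real.exp (-(1 / (4 * t)) * ‖y - z‖ ^ 2)) := by
      apply h1'.bdd_mul (c := M) hφc.aestronglyMeasurable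
      exact Filter.Eventually.of_forall (fun z => by simpa [Real.norm_eq_abs] using hM z)
    have h3 := (h2.const_mul ((4 * π * t) ^ (-(n : ℝ) / 2))).mul_const C
    apply h3.congr
    filter_upwards with z
    simp only [hg]
    rw [show -(1 / (4 * t)) * ‖y - z‖ ^ 2 = -‖y - z‖ ^ 2 / (4 * t) by ring]
    ring
  have hle : ∀ z, (4 * π * s) ^ (-(n : ℝ) / 2) * Real.exp (-‖x - z‖ ^ 2 / (4 * s)) * φ z
      ≤ g z := by
    intro z
    have hA : (0:ℝ) ≤ ‖x - z‖ := norm_nonneg _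
    have hD : (0:ℝ) ≤ ‖x - y‖ := norm_nonneg _
    have hB : ‖y - z‖ ≤ ‖x - z‖ + ‖x - y‖ := by
      have : y - z = (x - z) - (x - y) := by abel
      rw [this]
      exact norm_sub_le _ _
    have hkey : ‖y - z‖ ^ 2 / t ≤ ‖x - z‖ ^ 2 / s + ‖x - y‖ ^ 2 / (t - s) :=
      pini_aux_scalar _ _ _ s t hA hD hB (norm_nonneg _) hs hst
    have hexp : Real.exp (-‖x - z‖ ^ 2 / (4 * s))
        ≤ Real.exp (-‖y - z‖ ^ 2 / (4 * t)) * Real.exp (‖x - y‖ ^ 2 / (4 * (t - s))) := by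
      rw [← Real.exp_add]
      apply Real.exp_le_exp.2
      have e1 : -‖x - z‖ ^ 2 / (4 * s) = -(‖x - z‖ ^ 2 / s) / 4 := by
        rw [neg_div, neg_div, neg_inj, div_div, mul_comm 4 s]
      have e2 : -‖y - z‖ ^ 2 / (4 * t) = -(‖y - z‖ ^ 2 / t) / 4 := by
        rw [neg_div, neg_div, neg_inj, div_div, mul_comm 4 t]
      have e3 : ‖x - y‖ ^ 2 / (4 * (t - s)) = (‖x - y‖ ^ 2 / (t - s)) / 4 := by
        rw [div_div, mul_comm]
      rw [e1, e2, e3]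
      linarith
    have hpre := pini_aux_prefactor s t n hs hst
    have hP : (0:ℝ) < (4 * π * s) ^ (-(n : ℝ) / 2) :=
      Real.rpow_pos_of_pos (by positivity) _
    calc (4 * π * s) ^ (-(n : ℝ) / 2) * Real.exp (-‖x - z‖ ^ 2 / (4 * s)) * φ z
        ≤ (4 * π * s) ^ (-(n : ℝ) / 2) *
            (Real.exp (-‖y - z‖ ^ 2 / (4 * t)) *
              Real.exp (‖x - y‖ ^ 2 / (4 * (t - s)))) * φ z := by
          exact mul_le_mul_of_nonneg_right
            (mul_le_mul_of_nonneg_left hexp hP.le) (hφ0 z)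
      _ = g z := by rw [hg, hpre, hC]; ring
  have h0 : 0 ≤ᵐ[volume] fun z : EuclideanSpace ℝ (Fin n) =>
      (4 * π * s) ^ (-(n : ℝ) / 2) * Real.exp (-‖x - z‖ ^ 2 / (4 * s)) * φ z := by
    filter_upwards with z
    have : (0:ℝ) < (4 * π * s) ^ (-(n : ℝ) / 2) := Real.rpow_pos_of_pos (by positivity) _
    have := hφ0 z
    positivity
  have hmono := integral_mono_of_nonneg h0 hgi (Filter.Eventually.of_forall hle)
  rw [hf x s, hf y t]
  calc (∫ z : EuclideanSpace ℝ (Fin n),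
        (4 * π * s) ^ (-(n : ℝ) / 2) * Real.exp (-‖x - z‖ ^ 2 / (4 * s)) * φ z)
      ≤ ∫ z, g z := hmono
    _ = (∫ z : EuclideanSpace ℝ (Fin n),
          (4 * π * t) ^ (-(n : ℝ) / 2) * Real.exp (-‖y - z‖ ^ 2 / (4 * t)) * φ z) * C := by
        rw [hg]; exact integral_mul_const _ _
    _ = (∫ z : EuclideanSpace ℝ (Fin n),
          (4 * π * t) ^ (-(n : ℝ) / 2) * Real.exp (-‖y - z‖ ^ 2 / (4 * t)) * φ z) *
            (t / s) ^ ((n : ℝ) / 2) * Real.exp (‖x - y‖ ^ 2 / (4 * (t - s))) := by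
        rw [hC]; ring
end

section
/- Let -1 < a < 1 and n ≥ 2, and define G(x,y) = (|x|² + y²)^(-(n+a-1)/2) on ℝ^n × ℝ with (x,y) ≠ (0,0). Then for all (x,y) with y ≠ 0, G satisfies the extension equation div_{x,y}(|y|^a ∇_{x,y} G) = 0, i.e. Δ_x G + ∂²_y G + (a/y) ∂_y G = 0. -/
open Real

lemma aux_d1 (c p t₀ : ℝ) (h : 0 < c + t₀^2) :
    HasDerivAt (fun t => (c + t^2) ^ p) (p * (c + t₀^2) ^ (p-1) * (2*t₀)) t₀ := by
  have h1 : HasDerivAt (fun t : ℝ => c + t^2) (2*t₀) t₀ := by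
    simpa [mul_comm] using (hasDerivAt_pow 2 t₀).const_add c
  have h2 : HasDerivAt (fun u : ℝ => u ^ p) (p * (c + t₀^2) ^ (p-1)) (c + t₀^2) :=
    Real.hasDerivAt_rpow_const (Or.inl h.ne')
  simpa [mul_assoc, Function.comp_def] using h2.comp t₀ h1

lemma aux_deriv1 (c p t₀ : ℝ) (h : 0 < c + t₀^2) :
    deriv (fun t => (c + t^2) ^ p) t₀ = p * (c + t₀^2) ^ (p-1) * (2*t₀) :=
  (aux_d1 c p t₀ h).deriv

lemma aux_deriv2 (c p t₀ : ℝ) (h : 0 < c + t₀^2) :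
    deriv (fun t => deriv (fun t' => (c + t'^2) ^ p) t) t₀
      = p*(p-1)*(c+t₀^2)^(p-2)*(2*t₀)^2 + p*(c+t₀^2)^(p-1)*2 := by
  have hev : (fun t => deriv (fun t' => (c + t'^2) ^ p) t)
      =ᶠ[nhds t₀] (fun t => p * (c + t^2) ^ (p-1) * (2*t)) := by
    have hopen : IsOpen {t : ℝ | 0 < c + t^2} :=
      isOpen_lt continuous_const (by continuity)
    filter_upwards [hopen.mem_nhds h] with t ht
    exact aux_deriv1 c p t ht
  rw [hev.deriv_eq]
  have hg : HasDerivAt (fun t : ℝ => 2*t) 2 t₀ := by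
    simpa using (hasDerivAt_id t₀).const_mul (2:ℝ)
  have hd := ((aux_d1 c (p-1) t₀ h).const_mul p).mul hg
  have e : p - 1 - 1 = p - 2 := by ring
  rw [e] at hd
  rw [(show HasDerivAt (fun t => p * (c + t ^ 2) ^ (p - 1) * (2 * t)) _ t₀ from hd).deriv]
  ring

/-- The function `G(x,y) = (|x|² + y²)^{-(n+a-1)/2}` solves the Caffarelli–Silvestre
extension equation `Δₓ G + ∂²_y G + (a/y) ∂_y G = 0` away from `{y = 0}`. -/
theorem extension_fundamental_solution
    (n : ℕ) (hn : 2 ≤ n) (a : ℝ) (ha1 : -1 < a) (ha2 : a < 1)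
    (G : (Fin n → ℝ) → ℝ → ℝ)
    (hG : ∀ x y, G x y = (∑ i, (x i) ^ 2 + y ^ 2) ^ (-((n : ℝ) + a - 1) / 2))
    (x : Fin n → ℝ) (y : ℝ) (hy : y ≠ 0) :
    (∑ i, deriv (fun t => deriv (fun t' => G (Function.update x i t') y) t) (x i))
      + deriv (fun t => deriv (fun t' => G x t') t) y
      + (a / y) * deriv (fun t' => G x t') y = 0 := by
  set p : ℝ := -((n : ℝ) + a - 1) / 2 with hp
  set Q : ℝ := ∑ i, (x i)^2 with hQ
  have hS : 0 < Q + y^2 := by positivity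
  -- the x-part
  have hxfun : ∀ i : Fin n, (fun t' => G (Function.update x i t') y)
      = fun t' => ((∑ j ∈ Finset.univ.erase i, (x j)^2 + y^2) + t'^2) ^ p := by
    intro i
    funext t'
    rw [hG]
    congr 1
    have h1 : (fun j => (Function.update x i t' j)^2)
        = Function.update (fun j => (x j)^2) i (t'^2) := by
      funext j
      by_cases hj : j = i
      · subst hj; simp
      · simp [Function.update_of_ne hj]
    rw [h1, Finset.sum_update_of_mem (Finset.mem_univ i),
      Finset.sdiff_singleton_eq_erase]
    ring
  have hcS : ∀ i : Fin n,
      (∑ j ∈ Finset.univ.erase i, (x j)^2 + y^2) + (x i)^2 = Q + y^2 := by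
    intro i
    have := Finset.sum_erase_add Finset.univ (fun j => (x j)^2) (Finset.mem_univ i)
    rw [hQ, ← this]; ring
  have hxterm : ∀ i : Fin n,
      deriv (fun t => deriv (fun t' => G (Function.update x i t') y) t) (x i)
        = p*(p-1)*(Q+y^2)^(p-2)*(2*(x i))^2 + p*(Q+y^2)^(p-1)*2 := by
    intro i
    rw [hxfun i]
    rw [aux_deriv2 _ p (x i) (by rw [hcS i]; exact hS)]
    rw [hcS i]
  -- the y-part
  have hyfun : (fun t' => G x t') = fun t' => (Q + t'^2) ^ p := by
    funext t'; rw [hG]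
  have hyterm2 : deriv (fun t => deriv (fun t' => G x t') t) y
      = p*(p-1)*(Q+y^2)^(p-2)*(2*y)^2 + p*(Q+y^2)^(p-1)*2 := by
    rw [hyfun]; exact aux_deriv2 Q p y hS
  have hyterm1 : deriv (fun t' => G x t') y = p * (Q+y^2)^(p-1) * (2*y) := by
    rw [hyfun]; exact aux_deriv1 Q p y hS
  rw [hyterm2, hyterm1]
  rw [Finset.sum_congr rfl (fun i _ => hxterm i)]
  rw [Finset.sum_add_distrib, Finset.sum_const, ← Finset.mul_sum]
  have hsq : ∑ i, (2 * x i)^2 = 4 * Q := by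
    rw [hQ, Finset.mul_sum]; apply Finset.sum_congr rfl; intro i _; ring
  rw [hsq, Finset.card_univ, Fintype.card_fin, nsmul_eq_mul]
  have hpow : (Q + y^2) ^ (p-1) = (Q + y^2) ^ (p-2) * (Q + y^2) := by
    rw [← Real.rpow_add_one hS.ne']
    congr 1
    ring
  rw [hpow, hp]
  field_simp
  ring
end

section
/- Let 0 < s < 1 and r > 0. Define A_r^(s)(y) = c(n,s) · r^(2s) / ((|y|² - r²)^s |y|^n) for |y| > r and 0 for |y| ≤ r, where c(n,s) = 2 sin(πs)/(π σ_{n-1}) and σ_{n-1} is the surface measure of the unit sphere in ℝ^n. Then ∫_{ℝ^n} A_r^(s)(y) dy = 1. -/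
open MeasureTheory Real

section Aux
open Set

private lemma beta_eval {s : ℝ} (hs0 : 0 < s) (hs1 : s < 1) :
    ∫ u in Ioo (0:ℝ) 1, u ^ (-s) * (1 - u) ^ (s - 1) = π / Real.sin (π * s) := by
  have h1 : Complex.betaIntegral (1 - s) s
      = ((∫ u in (0:ℝ)..1, u ^ (-s) * (1 - u) ^ (s - 1)) : ℝ) := by
    rw [Complex.betaIntegral, ← intervalIntegral.integral_ofReal]
    refine intervalIntegral.integral_congr fun x hx => ?_
    rw [uIcc_of_le zero_le_one] at hx
    rw [Complex.ofReal_mul, Complex.ofReal_cpow hx.1, Complex.ofReal_cpow (by linarith [hx.2])]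
    push_cast
    ring_nf
  have h2 := Complex.Gamma_mul_Gamma_eq_betaIntegral
    (s := (1 - (s:ℂ))) (t := (s:ℂ)) (by simp; linarith) (by simpa using hs0)
  rw [sub_add_cancel, Complex.Gamma_one, one_mul] at h2
  have h3 : ((1 : ℂ) - (s:ℂ)) = ((1 - s : ℝ) : ℂ) := by push_cast; ring
  rw [h3] at h1 h2
  simp only [Complex.Gamma_ofReal] at h2
  rw [h1] at h2
  have h4 : Real.Gamma (1 - s) * Real.Gamma s
      = ∫ u in (0:ℝ)..1, u ^ (-s) * (1 - u) ^ (s - 1) := by exact_mod_cast h2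
  rw [intervalIntegral.integral_of_le zero_le_one, MeasureTheory.integral_Ioc_eq_integral_Ioo]
    at h4
  rw [← h4, mul_comm, Real.Gamma_mul_Gamma_one_sub]

private lemma key1d {s : ℝ} (hs0 : 0 < s) (hs1 : s < 1) {r : ℝ} (hr : 0 < r) :
    ∫ x in Ioi r, (x ^ 2 - r ^ 2) ^ (-s) * x⁻¹
      = π / (Real.sin (π * s) * (2 * r ^ (2 * s))) := by
  have hS : 0 < Real.sin (π * s) := by
    apply Real.sin_pos_of_pos_of_lt_pi (by positivity)
    calc π * s < π * 1 := by nlinarith [pi_pos]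
    _ = π := mul_one π
  have hderiv : ∀ x ∈ Ioi r, HasDerivWithinAt (fun x : ℝ => 1 - r ^ 2 / x ^ 2)
      (2 * r ^ 2 / x ^ 3) (Ioi r) x := by
    intro x hx
    have hx0 : (0:ℝ) < x := hr.trans hx
    have h1 : HasDerivAt (fun x : ℝ => x ^ 2) (2 * x) x := by
      simpa using hasDerivAt_pow 2 x
    have h2 := (hasDerivAt_const x (r ^ 2)).div h1 (pow_ne_zero 2 hx0.ne')
    have h3 := h2.const_sub 1
    have : -((0 * x ^ 2 - r ^ 2 * (2 * x)) / (x ^ 2) ^ 2) = 2 * r ^ 2 / x ^ 3 := by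
      field_simp; ring
    rw [this] at h3
    exact h3.hasDerivWithinAt
  have hinj : InjOn (fun x : ℝ => 1 - r ^ 2 / x ^ 2) (Ioi r) := by
    intro x hx y hy hxy
    simp only [mem_Ioi] at hx hy
    have hx0 : (0:ℝ) < x := hr.trans hx
    have hy0 : (0:ℝ) < y := hr.trans hy
    have hxy' : 1 - r ^ 2 / x ^ 2 = 1 - r ^ 2 / y ^ 2 := hxy
    have h : x ^ 2 = y ^ 2 := by
      have h' : r ^ 2 / x ^ 2 = r ^ 2 / y ^ 2 := by linarith
      field_simp at h'
      nlinarith [h']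
    calc x = Real.sqrt (x ^ 2) := (Real.sqrt_sq hx0.le).symm
    _ = Real.sqrt (y ^ 2) := by rw [h]
    _ = y := Real.sqrt_sq hy0.le
  have himg : (fun x : ℝ => 1 - r ^ 2 / x ^ 2) '' Ioi r = Ioo 0 1 := by
    ext u
    constructor
    · rintro ⟨x, hx, rfl⟩
      simp only [mem_Ioi] at hx
      have hx0 : (0:ℝ) < x := hr.trans hx
      constructor
      · have : r ^ 2 / x ^ 2 < 1 := by
          rw [div_lt_one (by positivity)]; nlinarith
        linarith
      · have : 0 < r ^ 2 / x ^ 2 := by positivity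
        linarith
    · intro hu
      obtain ⟨hu0, hu1⟩ := hu
      have h1u : 0 < 1 - u := by linarith
      have hsq : 0 < Real.sqrt (1 - u) := Real.sqrt_pos.2 h1u
      have hsq1 : Real.sqrt (1 - u) < 1 := by
        have := Real.sqrt_lt_sqrt h1u.le (by linarith : 1 - u < 1)
        rwa [Real.sqrt_one] at this
      refine ⟨r / Real.sqrt (1 - u), ?_, ?_⟩
      · rw [mem_Ioi, lt_div_iff₀ hsq]
        nlinarith
      · have hsq2 : (Real.sqrt (1 - u)) ^ 2 = 1 - u := Real.sq_sqrt h1u.le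
        show 1 - r ^ 2 / (r / Real.sqrt (1 - u)) ^ 2 = u
        rw [div_pow, hsq2]
        rw [div_div_eq_mul_div, mul_comm, mul_div_assoc, div_self (pow_ne_zero 2 hr.ne'),
          mul_one]
        ring
  have key := integral_image_eq_integral_abs_deriv_smul measurableSet_Ioi hderiv hinj
    (fun u => u ^ (-s) * (1 - u) ^ (s - 1))
  rw [himg, beta_eval hs0 hs1] at key
  have hcongr : ∫ x in Ioi r, |2 * r ^ 2 / x ^ 3| •
      ((1 - r ^ 2 / x ^ 2) ^ (-s) * (1 - (1 - r ^ 2 / x ^ 2)) ^ (s - 1))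
      = ∫ x in Ioi r, (2 * r ^ (2 * s)) * ((x ^ 2 - r ^ 2) ^ (-s) * x⁻¹) := by
    refine setIntegral_congr_fun measurableSet_Ioi fun x hx => ?_
    simp only [mem_Ioi] at hx
    have hx0 : (0:ℝ) < x := hr.trans hx
    have ha : (0:ℝ) < x ^ 2 - r ^ 2 := by nlinarith
    have e1 : 1 - r ^ 2 / x ^ 2 = (x ^ 2 - r ^ 2) / x ^ 2 := by field_simp
    have e2 : 1 - (1 - r ^ 2 / x ^ 2) = r ^ 2 / x ^ 2 := by ring
    rw [smul_eq_mul, e2, e1, abs_of_pos (by positivity),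
      Real.div_rpow ha.le (by positivity), Real.div_rpow (by positivity) (by positivity)]
    rw [Real.rpow_neg (by positivity : (0:ℝ) ≤ x ^ 2),
      Real.rpow_sub (by positivity : (0:ℝ) < x ^ 2),
      Real.rpow_sub (by positivity : (0:ℝ) < r ^ 2),
      Real.rpow_one, Real.rpow_one]
    have hr2s : (r ^ 2) ^ s = r ^ (2 * s) := by
      rw [← Real.rpow_natCast r 2, ← Real.rpow_mul hr.le]; norm_num
    have hx2s : (x ^ 2) ^ s ≠ 0 := by positivity
    rw [← hr2s]
    field_simp
  rw [hcongr, MeasureTheory.integral_const_mul] at key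
  have h2r : (0:ℝ) < 2 * r ^ (2 * s) := by positivity
  rw [eq_div_iff (by positivity : Real.sin (π * s) * (2 * r ^ (2 * s)) ≠ 0)]
  rw [div_eq_iff hS.ne'] at key
  linear_combination -key

end Aux

section Main
open Set

/-- The nonlocal mean-value kernel `A_r^{(s)}` of M. Riesz has total mass one:
`∫_{ℝⁿ} A_r^{(s)}(y) dy = 1`, where `A_r^{(s)}(y) = c(n,s) r^{2s}/((|y|²-r²)^s |y|ⁿ)`
for `|y| > r` and `0` otherwise, with `c(n,s) = 2 sin(πs)/(π σ_{n-1})` and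
`σ_{n-1} = 2π^{n/2}/Γ(n/2)`. -/
theorem riesz_mean_value_kernel_mass_one
    (n : ℕ) (hn : 1 ≤ n) (s : ℝ) (hs0 : 0 < s) (hs1 : s < 1) (r : ℝ) (hr : 0 < r) :
    ∫ y : EuclideanSpace ℝ (Fin n),
        (if r < ‖y‖ then
          (2 * Real.sin (π * s) / (π * (2 * π ^ ((n : ℝ) / 2) / Real.Gamma ((n : ℝ) / 2))))
            * r ^ (2 * s) / ((‖y‖ ^ 2 - r ^ 2) ^ s * ‖y‖ ^ n)
        else 0)
      = 1 := by
  haveI : Nonempty (Fin n) := ⟨⟨0, hn⟩⟩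
  set c : ℝ := 2 * Real.sin (π * s) / (π * (2 * π ^ ((n : ℝ) / 2) / Real.Gamma ((n : ℝ) / 2)))
    with hc
  have key := MeasureTheory.integral_fun_norm_addHaar (volume : Measure (EuclideanSpace ℝ (Fin n)))
    (fun ρ : ℝ => if r < ρ then c * r ^ (2 * s) / ((ρ ^ 2 - r ^ 2) ^ s * ρ ^ n) else 0)
  rw [finrank_euclideanSpace_fin] at key
  rw [key]
  -- compute the radial integral
  have hrad : ∫ ρ in Ioi (0:ℝ), ρ ^ (n - 1) •
      (if r < ρ then c * r ^ (2 * s) / ((ρ ^ 2 - r ^ 2) ^ s * ρ ^ n) else 0)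
      = (c * r ^ (2 * s)) * (π / (Real.sin (π * s) * (2 * r ^ (2 * s)))) := by
    have step1 : ∫ ρ in Ioi (0:ℝ), ρ ^ (n - 1) •
        (if r < ρ then c * r ^ (2 * s) / ((ρ ^ 2 - r ^ 2) ^ s * ρ ^ n) else 0)
        = ∫ ρ in Ioi (0:ℝ), (Ioi r).indicator
            (fun ρ => ρ ^ (n - 1) * (c * r ^ (2 * s) / ((ρ ^ 2 - r ^ 2) ^ s * ρ ^ n))) ρ := by
      refine setIntegral_congr_fun measurableSet_Ioi fun ρ hρ => ?_
      by_cases h : r < ρ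
      · simp [Set.indicator_apply, mem_Ioi, h]
      · simp [Set.indicator_apply, mem_Ioi, h]
    rw [step1, setIntegral_indicator measurableSet_Ioi,
      Set.Ioi_inter_Ioi, max_eq_right hr.le]
    have step2 : ∫ ρ in Ioi r,
        ρ ^ (n - 1) * (c * r ^ (2 * s) / ((ρ ^ 2 - r ^ 2) ^ s * ρ ^ n))
        = ∫ ρ in Ioi r, (c * r ^ (2 * s)) * ((ρ ^ 2 - r ^ 2) ^ (-s) * ρ⁻¹) := by
      refine setIntegral_congr_fun measurableSet_Ioi fun ρ hρ => ?_
      simp only [mem_Ioi] at hρ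
      have hρ0 : (0:ℝ) < ρ := hr.trans hρ
      have ha : (0:ℝ) < ρ ^ 2 - r ^ 2 := by nlinarith
      have hpow : ρ ^ n = ρ ^ (n - 1) * ρ := by
        conv_lhs => rw [show n = (n - 1) + 1 from (Nat.succ_pred_eq_of_pos hn).symm]
        rw [pow_succ]
      rw [Real.rpow_neg ha.le, hpow]
      have h1 : ((ρ ^ 2 - r ^ 2) ^ s) ≠ 0 := by positivity
      have h2 : ρ ^ (n - 1) ≠ 0 := by positivity
      field_simp
    rw [step2, MeasureTheory.integral_const_mul, key1d hs0 hs1 hr]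
  rw [hrad]
  -- volume of the unit ball
  have hV : (volume (Metric.ball (0 : EuclideanSpace ℝ (Fin n)) 1)).toReal
      = π ^ ((n : ℝ) / 2) / Real.Gamma ((n : ℝ) / 2 + 1) := by
    rw [EuclideanSpace.volume_ball]
    simp only [Fintype.card_fin]
    rw [ENNReal.ofReal_one, one_pow, one_mul, ENNReal.toReal_ofReal (by positivity)]
    congr 1
    rw [Real.sqrt_eq_rpow, ← Real.rpow_natCast (π ^ ((1:ℝ)/2)) n, ← Real.rpow_mul pi_pos.le]
    ring_nf
  rw [show volume.real (Metric.ball (0 : EuclideanSpace ℝ (Fin n)) 1)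
    = π ^ ((n : ℝ) / 2) / Real.Gamma ((n : ℝ) / 2 + 1) from hV]
  -- final arithmetic
  have hG : 0 < Real.Gamma ((n : ℝ) / 2) := Real.Gamma_pos_of_pos (by positivity)
  have hGadd : Real.Gamma ((n : ℝ) / 2 + 1) = ((n : ℝ) / 2) * Real.Gamma ((n : ℝ) / 2) := by
    rw [Real.Gamma_add_one (by positivity : ((n:ℝ)/2) ≠ 0)]
  have hS : 0 < Real.sin (π * s) := by
    apply Real.sin_pos_of_pos_of_lt_pi (by positivity)
    calc π * s < π * 1 := by nlinarith [pi_pos]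
    _ = π := mul_one π
  have hP : (0:ℝ) < π ^ ((n : ℝ) / 2) := Real.rpow_pos_of_pos pi_pos _
  have hR : (0:ℝ) < r ^ (2 * s) := Real.rpow_pos_of_pos hr _
  have hn0 : (0:ℝ) < (n:ℝ) := by exact_mod_cast hn
  rw [hc, hGadd, nsmul_eq_mul]
  field_simp
  ring_nf
  have hP' : π ^ ((n:ℝ) * (1/2)) ≠ 0 := by positivity
  have hG' : Real.Gamma ((n:ℝ) * (1/2)) ≠ 0 := by
    rw [← div_eq_mul_one_div]; exact hG.ne'
  field_simp

end Main
end
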